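/- Let A = {0,4,5,6,7,9,13,16,20,22,23,24,25}, D = {0,1,2,3,5,8,10,13,14,15,18,22,25}, and B = {0,1,2,5,6,8,11,12,14,16,22} be subsets of ℤ/29ℤ, and let MA, MD, MB be the associated binary circulant matrices of order 29 (with entry −1 at (r,s) if s − r lies in the set, and +1 otherwise). Then MA is symmetric (MAᵀ = MA) and MA·MAᵀ + MD·MDᵀ + 2·(MB·MBᵀ) = 116·I; consequently plugging (A, B, C = B, D) into the GP array yields a symmetric Hadamard matrix of order 116. -/

import Mathlib

set_option linter.unusedSectionVars false
set_option linter.unreachableTactic false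
set_option linter.unusedTactic false


open Matrix

/-- The binary circulant matrix of order `v` associated to a subset `X ⊆ ℤ/vℤ`:
the entry at `(r, s)` is `-1` if `s - r ∈ X` and `+1` otherwise. -/
def circOf {v : ℕ} (X : Finset (ZMod v)) : Matrix (ZMod v) (ZMod v) ℤ :=
  Matrix.of fun r s => if s - r ∈ X then -1 else 1

/-- The back-diagonal permutation matrix `R` of order `v`:
`R i j = 1` if `i + j = -1` in `ZMod v`, and `0` otherwise. -/
def backDiag (v : ℕ) : Matrix (ZMod v) (ZMod v) ℤ :=
  Matrix.of fun i j => if i + j = -1 then 1 else 0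

/-- The GP array of Balonin and Seberry, built from four matrices of order `v`,
as a `4v × 4v` matrix indexed by `Fin 4 × ZMod v`. -/
def GParray (v : ℕ) [NeZero v] (A B C D : Matrix (ZMod v) (ZMod v) ℤ) :
    Matrix (Fin 4 × ZMod v) (Fin 4 × ZMod v) ℤ :=
  Matrix.of fun p q =>
    (![![A, B * backDiag v, C * backDiag v, D * backDiag v],
       ![C * backDiag v, Dᵀ * backDiag v, -A, -(Bᵀ * backDiag v)],
       ![B * backDiag v, -A, -(Dᵀ * backDiag v), Cᵀ * backDiag v],
       ![D * backDiag v, -(Cᵀ * backDiag v), Bᵀ * backDiag v, -A]] p.1 q.1) p.2 q.2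


def cf {v : ℕ} (f : ZMod v → ℤ) : Matrix (ZMod v) (ZMod v) ℤ :=
  Matrix.of fun r s => f (s - r)

def Tn {v : ℕ} (f : ZMod v → ℤ) : ZMod v → ℤ := fun x => f (-x)

def conv {v : ℕ} [NeZero v] (f g : ZMod v → ℤ) : ZMod v → ℤ :=
  fun x => ∑ u : ZMod v, f u * g (x - u)

variable {v : ℕ} [NeZero v]

lemma circOf_eq (X : Finset (ZMod v)) : circOf X = cf (fun x => if x ∈ X then (-1 : ℤ) else 1) := rfl

@[simp] lemma Tn_Tn (f : ZMod v → ℤ) : Tn (Tn f) = f := by funext x; simp [Tn]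

@[simp] lemma cf_transpose (f : ZMod v → ℤ) : (cf f)ᵀ = cf (Tn f) := by
  ext r s; simp [cf, Tn, transpose_apply, neg_sub]

@[simp] lemma cf_mul_cf (f g : ZMod v → ℤ) : cf f * cf g = cf (conv f g) := by
  ext r s
  rw [mul_apply]
  refine Fintype.sum_equiv (Equiv.subRight r) _ _ fun t => ?_
  simp only [cf, conv, Equiv.subRight, Equiv.coe_fn_mk, of_apply]
  congr 2
  ring

@[simp] lemma cf_mul_cf_assoc (f g : ZMod v → ℤ) (X : Matrix (ZMod v) (ZMod v) ℤ) :
    cf f * (cf g * X) = cf (conv f g) * X := by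
  rw [← Matrix.mul_assoc, cf_mul_cf]

lemma conv_comm (f g : ZMod v → ℤ) : conv f g = conv g f := by
  funext x
  refine Fintype.sum_equiv (Equiv.subLeft x) _ _ fun u => ?_
  simp [conv, Equiv.subLeft, mul_comm]

@[simp] lemma bd_transpose : (backDiag v)ᵀ = backDiag v := by
  ext r s; simp [backDiag, transpose_apply, add_comm]

lemma mul_bd_apply (M : Matrix (ZMod v) (ZMod v) ℤ) (r s : ZMod v) :
    (M * backDiag v) r s = M r (-1 - s) := by
  rw [mul_apply]
  have : ∀ k : ZMod v, (backDiag v) k s = if k = -1 - s then 1 else 0 := by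
    intro k; simp [backDiag, eq_sub_iff_add_eq]
  simp [this, mul_ite, mul_one, mul_zero]

@[simp] lemma bd_mul_bd : backDiag v * backDiag v = 1 := by
  ext r s
  rw [mul_bd_apply]
  have h : (r + (-1 - s) = -1) ↔ (r = s) := by
    constructor
    · intro h; linear_combination h
    · intro h; rw [h]; ring
  simp [backDiag, one_apply, h]

@[simp] lemma bd_mul_bd_assoc (X : Matrix (ZMod v) (ZMod v) ℤ) :
    backDiag v * (backDiag v * X) = X := by
  rw [← Matrix.mul_assoc, bd_mul_bd, one_mul]

@[simp] lemma bd_mul_cf (f : ZMod v → ℤ) :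
    backDiag v * cf f = cf (Tn f) * backDiag v := by
  ext r s
  rw [mul_bd_apply]
  have : ∀ x, (backDiag v * cf f) r x = cf f (-1 - r) x := by
    intro x
    rw [mul_apply]
    have : ∀ k : ZMod v, (backDiag v) r k = if k = -1 - r then 1 else 0 := by
      intro k; simp [backDiag, eq_sub_iff_add_eq']
    simp [this, ite_mul, one_mul, zero_mul]
  rw [this]
  simp [cf, Tn]
  congr 1; ring

@[simp] lemma bd_mul_cf_assoc (f : ZMod v → ℤ) (X : Matrix (ZMod v) (ZMod v) ℤ) :
    backDiag v * (cf f * X) = cf (Tn f) * (backDiag v * X) := by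
  rw [← Matrix.mul_assoc, ← Matrix.mul_assoc, bd_mul_cf]

@[simp] lemma cfR_transpose (f : ZMod v → ℤ) :
    (cf f * backDiag v)ᵀ = cf f * backDiag v := by
  rw [transpose_mul, bd_transpose, cf_transpose, bd_mul_cf, Tn_Tn]


variable {v : ℕ} [NeZero v]


def blk (v : ℕ) [NeZero v] (A B C D : Matrix (ZMod v) (ZMod v) ℤ) :
    Fin 4 → Fin 4 → Matrix (ZMod v) (ZMod v) ℤ :=
  ![![A, B * backDiag v, C * backDiag v, D * backDiag v],
    ![C * backDiag v, Dᵀ * backDiag v, -A, -(Bᵀ * backDiag v)],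
    ![B * backDiag v, -A, -(Dᵀ * backDiag v), Cᵀ * backDiag v],
    ![D * backDiag v, -(Cᵀ * backDiag v), Bᵀ * backDiag v, -A]]

lemma GParray_apply (A B C D : Matrix (ZMod v) (ZMod v) ℤ) (p q : Fin 4 × ZMod v) :
    GParray v A B C D p q = blk v A B C D p.1 q.1 p.2 q.2 := rfl

lemma GP_mul_GPT (A B C D : Matrix (ZMod v) (ZMod v) ℤ)
    (h : ∀ i j : Fin 4, ∑ k : Fin 4, blk v A B C D i k * (blk v A B C D j k)ᵀ =
      if i = j then (116 : ℤ) • (1 : Matrix (ZMod v) (ZMod v) ℤ) else 0) :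
    GParray v A B C D * (GParray v A B C D)ᵀ =
      (116 : ℤ) • (1 : Matrix (Fin 4 × ZMod v) (Fin 4 × ZMod v) ℤ) := by
  ext ⟨i, r⟩ ⟨j, s⟩
  rw [mul_apply]
  have lhs : ∑ t : Fin 4 × ZMod v, GParray v A B C D (i, r) t * (GParray v A B C D)ᵀ t (j, s)
      = ∑ k : Fin 4, (blk v A B C D i k * (blk v A B C D j k)ᵀ) r s := by
    rw [Fintype.sum_prod_type]
    refine Finset.sum_congr rfl fun k _ => ?_
    rw [mul_apply]
    refine Finset.sum_congr rfl fun t _ => ?_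
    rfl
  rw [lhs, ← Matrix.sum_apply, h i j]
  by_cases hij : i = j
  · subst hij
    simp [one_apply, Prod.ext_iff]
  · simp [one_apply, Prod.ext_iff, hij]

@[simp] lemma fin4_mk0 (h : 0 < 4) : (⟨0, h⟩ : Fin 4) = 0 := rfl
@[simp] lemma fin4_mk1 (h : 1 < 4) : (⟨1, h⟩ : Fin 4) = 1 := rfl
@[simp] lemma fin4_mk2 (h : 2 < 4) : (⟨2, h⟩ : Fin 4) = 2 := rfl
@[simp] lemma fin4_mk3 (h : 3 < 4) : (⟨3, h⟩ : Fin 4) = 3 := rfl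

lemma cf4 (p1 p2 p3 p4 : ZMod v → ℤ) (n : ℤ)
    (h : ∀ x, p1 x + p2 x + p3 x + p4 x = if x = 0 then n else 0) :
    cf p1 + cf p2 + cf p3 + cf p4 = n • (1 : Matrix (ZMod v) (ZMod v) ℤ) := by
  ext r s
  have hx := h (s - r)
  simp only [Matrix.add_apply, cf, of_apply, Matrix.smul_apply, Matrix.one_apply,
    smul_eq_mul, sub_eq_zero] at hx ⊢
  rw [hx]
  by_cases hrs : r = s
  · simp [hrs]
  · simp [hrs, Ne.symm hrs]

lemma blocks_eq (fa fb fd : ZMod v → ℤ) (n : ℤ) (hA : Tn fa = fa)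
    (hG : ∀ x, conv fa fa x + conv fb (Tn fb) x + conv fb (Tn fb) x + conv fd (Tn fd) x
      = if x = 0 then n else 0) :
    ∀ i j : Fin 4, ∑ k : Fin 4, blk v (cf fa) (cf fb) (cf fb) (cf fd) i k *
        (blk v (cf fa) (cf fb) (cf fb) (cf fd) j k)ᵀ =
      if i = j then (n : ℤ) • (1 : Matrix (ZMod v) (ZMod v) ℤ) else 0 := by
  have hc1 : conv fb fa = conv fa fb := conv_comm _ _
  have hc2 : conv fd fa = conv fa fd := conv_comm _ _
  have hc3 : conv fd fb = conv fb fd := conv_comm _ _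
  have hc4 : conv (Tn fb) fa = conv fa (Tn fb) := conv_comm _ _
  have hc5 : conv (Tn fd) fa = conv fa (Tn fd) := conv_comm _ _
  have hc6 : conv (Tn fd) fb = conv fb (Tn fd) := conv_comm _ _
  have hc7 : conv (Tn fd) (Tn fb) = conv (Tn fb) (Tn fd) := conv_comm _ _
  have hc8 : conv (Tn fb) fb = conv fb (Tn fb) := conv_comm _ _
  have hc9 : conv (Tn fd) fd = conv fd (Tn fd) := conv_comm _ _
  have hc10 : conv (Tn fb) fd = conv fd (Tn fb) := conv_comm _ _
  have key : cf (conv fa fa) + cf (conv fb (Tn fb)) + cf (conv fb (Tn fb)) + cf (conv fd (Tn fd))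
      = n • (1 : Matrix (ZMod v) (ZMod v) ℤ) := cf4 _ _ _ _ n hG
  intro i j
  fin_cases i <;> fin_cases j <;>
    simp only [blk, Fin.sum_univ_four, Fin.isValue,
      fin4_mk0, fin4_mk1, fin4_mk2, fin4_mk3, Matrix.cons_val_zero, Matrix.cons_val_one,
      Matrix.head_cons, Matrix.cons_val_two, Matrix.tail_cons, Matrix.cons_val_three] <;>
    (try simp only [transpose_neg, transpose_mul, bd_transpose, cf_transpose,
      cfR_transpose, Matrix.neg_mul, Matrix.mul_neg, neg_neg, Matrix.mul_assoc,
      bd_mul_cf_assoc, bd_mul_bd_assoc, bd_mul_bd, bd_mul_cf, cf_mul_cf, cf_mul_cf_assoc,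
      Tn_Tn, hA, Matrix.mul_one, Matrix.one_mul]) <;>
    (try simp only [hc1, hc2, hc3, hc4, hc5, hc6, hc7, hc8, hc9, hc10, if_true,
      reduceIte, Fin.mk.injEq, Fin.isValue, show ((0:Fin 4) = 0) = True by simp,
      show ((1:Fin 4) = 1) = True by simp]) <;>
    first
      | abel1
      | (exact Eq.trans (by abel1) key)

lemma blk_symm (fa fb fd : ZMod v → ℤ) (hA : Tn fa = fa) (i j : Fin 4) :
    (blk v (cf fa) (cf fb) (cf fb) (cf fd) i j)ᵀ = blk v (cf fa) (cf fb) (cf fb) (cf fd) j i := by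
  fin_cases i <;> fin_cases j <;>
    simp [blk, cf_transpose, cfR_transpose, hA]

lemma GP_symm (fa fb fd : ZMod v → ℤ) (hA : Tn fa = fa) :
    (GParray v (cf fa) (cf fb) (cf fb) (cf fd))ᵀ = GParray v (cf fa) (cf fb) (cf fb) (cf fd) := by
  ext ⟨i, r⟩ ⟨j, s⟩
  rw [transpose_apply, GParray_apply, GParray_apply]
  show blk v _ _ _ _ j i s r = _
  rw [← blk_symm fa fb fd hA i j]
  rfl

lemma pm_neg {x : ℤ} (h : x = 1 ∨ x = -1) : -x = 1 ∨ -x = -1 := by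
  rcases h with h | h <;> simp [h]

lemma GP_entries (fa fb fd : ZMod v → ℤ)
    (h1 : ∀ x, fa x = 1 ∨ fa x = -1) (h2 : ∀ x, fb x = 1 ∨ fb x = -1)
    (h3 : ∀ x, fd x = 1 ∨ fd x = -1) (p q : Fin 4 × ZMod v) :
    GParray v (cf fa) (cf fb) (cf fb) (cf fd) p q = 1 ∨
      GParray v (cf fa) (cf fb) (cf fb) (cf fd) p q = -1 := by
  obtain ⟨i, r⟩ := p
  obtain ⟨j, s⟩ := q
  rw [GParray_apply]
  simp only
  have h1' : ∀ x, Tn fa x = 1 ∨ Tn fa x = -1 := fun x => h1 _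
  have h2' : ∀ x, Tn fb x = 1 ∨ Tn fb x = -1 := fun x => h2 _
  have h3' : ∀ x, Tn fd x = 1 ∨ Tn fd x = -1 := fun x => h3 _
  fin_cases i <;> fin_cases j <;>
    simp only [blk, Fin.isValue, fin4_mk0, fin4_mk1, fin4_mk2, fin4_mk3,
      Matrix.cons_val_zero, Matrix.cons_val_one, Matrix.head_cons, Matrix.cons_val_two,
      Matrix.tail_cons, Matrix.cons_val_three, cf_transpose, Matrix.neg_apply,
      mul_bd_apply, cf, of_apply] <;>
    first
      | exact h1 _ | exact h2 _ | exact h3 _ | exact h1' _ | exact h2' _ | exact h3' _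
      | exact pm_neg (h1 _) | exact pm_neg (h2 _) | exact pm_neg (h3 _)
      | exact pm_neg (h1' _) | exact pm_neg (h2' _) | exact pm_neg (h3' _)

lemma gram (f : ZMod v → ℤ) : cf f * (cf f)ᵀ = cf (conv f (Tn f)) := by
  rw [cf_transpose, cf_mul_cf]

def fA : ZMod 29 → ℤ := fun x =>
  if x ∈ ({0, 4, 5, 6, 7, 9, 13, 16, 20, 22, 23, 24, 25} : Finset (ZMod 29)) then -1 else 1
def fB : ZMod 29 → ℤ := fun x =>
  if x ∈ ({0, 1, 2, 5, 6, 8, 11, 12, 14, 16, 22} : Finset (ZMod 29)) then -1 else 1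
def fD : ZMod 29 → ℤ := fun x =>
  if x ∈ ({0, 1, 2, 3, 5, 8, 10, 13, 14, 15, 18, 22, 25} : Finset (ZMod 29)) then -1 else 1

lemma dA : Tn fA = fA := by funext x; revert x; decide

lemma dG : ∀ x : ZMod 29, conv fA fA x + conv fB (Tn fB) x + conv fB (Tn fB) x
    + conv fD (Tn fD) x = if x = 0 then 116 else 0 := by decide

/-- For the subsets `A = {0,4,5,6,7,9,13,16,20,22,23,24,25}`,
`D = {0,1,2,3,5,8,10,13,14,15,18,22,25}`, `B = {0,1,2,5,6,8,11,12,14,16,22}` of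
`ℤ/29ℤ`, the associated binary circulant matrix `MA` is symmetric and
`MA·MAᵀ + MD·MDᵀ + 2·(MB·MBᵀ) = 116·I`; consequently the GP array built from
`(MA, MB, MB, MD)` is a symmetric Hadamard matrix of order `116`. -/
theorem symmetric_hadamard_116_construction :
    (circOf ({0, 4, 5, 6, 7, 9, 13, 16, 20, 22, 23, 24, 25} : Finset (ZMod 29)))ᵀ = circOf ({0, 4, 5, 6, 7, 9, 13, 16, 20, 22, 23, 24, 25} : Finset (ZMod 29)) ∧
    (circOf ({0, 4, 5, 6, 7, 9, 13, 16, 20, 22, 23, 24, 25} : Finset (ZMod 29))) * (circOf ({0, 4, 5, 6, 7, 9, 13, 16, 20, 22, 23, 24, 25} : Finset (ZMod 29)))ᵀ +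
      2 • ((circOf ({0, 1, 2, 5, 6, 8, 11, 12, 14, 16, 22} : Finset (ZMod 29))) * (circOf ({0, 1, 2, 5, 6, 8, 11, 12, 14, 16, 22} : Finset (ZMod 29)))ᵀ) +
      (circOf ({0, 1, 2, 3, 5, 8, 10, 13, 14, 15, 18, 22, 25} : Finset (ZMod 29))) * (circOf ({0, 1, 2, 3, 5, 8, 10, 13, 14, 15, 18, 22, 25} : Finset (ZMod 29)))ᵀ =
      (116 : ℤ) • (1 : Matrix (ZMod 29) (ZMod 29) ℤ) ∧
    (∀ p q, GParray 29 (circOf ({0, 4, 5, 6, 7, 9, 13, 16, 20, 22, 23, 24, 25} : Finset (ZMod 29))) (circOf ({0, 1, 2, 5, 6, 8, 11, 12, 14, 16, 22} : Finset (ZMod 29))) (circOf ({0, 1, 2, 5, 6, 8, 11, 12, 14, 16, 22} : Finset (ZMod 29))) (circOf ({0, 1, 2, 3, 5, 8, 10, 13, 14, 15, 18, 22, 25} : Finset (ZMod 29))) p q = 1 ∨ GParray 29 (circOf ({0, 4, 5, 6, 7, 9, 13, 16, 20, 22, 23, 24, 25} : Finset (ZMod 29))) (circOf ({0, 1, 2,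 5, 6, 8, 11, 12, 14, 16, 22} : Finset (ZMod 29))) (circOf ({0, 1, 2, 5, 6, 8, 11, 12, 14, 16, 22} : Finset (ZMod 29))) (circOf ({0, 1, 2, 3, 5, 8, 10, 13, 14, 15, 18, 22, 25} : Finset (ZMod 29))) p q = -1) ∧
    GParray 29 (circOf ({0, 4, 5, 6, 7, 9, 13, 16, 20, 22, 23, 24, 25} : Finset (ZMod 29))) (circOf ({0, 1, 2, 5, 6, 8, 11, 12, 14, 16, 22} : Finset (ZMod 29))) (circOf ({0, 1, 2, 5, 6, 8, 11, 12, 14, 16, 22} : Finset (ZMod 29))) (circOf ({0, 1, 2, 3, 5, 8, 10, 13, 14, 15, 18, 22, 25} : Finset (ZMod 29))) * (GParray 29 (circOf ({0, 4, 5, 6, 7, 9, 13, 16, 20, 22, 23, 24, 25} : Finset (ZMod 29))) (circOf ({0, 1, 2, 5, 6, 8, 11, 12, 14, 16, 22} : Finset (ZMod 29))) (circOf ({0, 1, 2, 5, 6, 8, 11, 12, 14, 16, 22} : Finset (ZMod 29))) (circOf ({0, 1, 2, 3, 5, 8, 10, 13, 14, 15, 18, 22, 25} : Finset (ZMod 29))))ᵀ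 =
      (116 : ℤ) • (1 : Matrix (Fin 4 × ZMod 29) (Fin 4 × ZMod 29) ℤ) ∧
    (GParray 29 (circOf ({0, 4, 5, 6, 7, 9, 13, 16, 20, 22, 23, 24, 25} : Finset (ZMod 29))) (circOf ({0, 1, 2, 5, 6, 8, 11, 12, 14, 16, 22} : Finset (ZMod 29))) (circOf ({0, 1, 2, 5, 6, 8, 11, 12, 14, 16, 22} : Finset (ZMod 29))) (circOf ({0, 1, 2, 3, 5, 8, 10, 13, 14, 15, 18, 22, 25} : Finset (ZMod 29))))ᵀ = GParray 29 (circOf ({0, 4, 5, 6, 7, 9, 13, 16, 20, 22, 23, 24, 25} : Finset (ZMod 29))) (circOf ({0, 1, 2, 5, 6, 8, 11, 12, 14, 16, 22} : Finset (ZMod 29))) (circOf ({0, 1, 2, 5, 6, 8, 11, 12, 14, 16, 22} : Finset (ZMod 29))) (circOf ({0, 1, 2, 3, 5, 8, 10, 13, 14, 15, 18, 22, 25} : Finset (ZMod 29))) := by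
  have eA : circOf ({0, 4, 5, 6, 7, 9, 13, 16, 20, 22, 23, 24, 25} : Finset (ZMod 29)) = cf fA := rfl
  have eB : circOf ({0, 1, 2, 5, 6, 8, 11, 12, 14, 16, 22} : Finset (ZMod 29)) = cf fB := rfl
  have eD : circOf ({0, 1, 2, 3, 5, 8, 10, 13, 14, 15, 18, 22, 25} : Finset (ZMod 29)) = cf fD := rfl
  rw [eA, eB, eD]
  have pmA : ∀ x, fA x = 1 ∨ fA x = -1 := by
    intro x; by_cases h : x ∈ ({0, 4, 5, 6, 7, 9, 13, 16, 20, 22, 23, 24, 25} : Finset (ZMod 29)) <;> simp [fA, h]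
  have pmB : ∀ x, fB x = 1 ∨ fB x = -1 := by
    intro x; by_cases h : x ∈ ({0, 1, 2, 5, 6, 8, 11, 12, 14, 16, 22} : Finset (ZMod 29)) <;> simp [fB, h]
  have pmD : ∀ x, fD x = 1 ∨ fD x = -1 := by
    intro x; by_cases h : x ∈ ({0, 1, 2, 3, 5, 8, 10, 13, 14, 15, 18, 22, 25} : Finset (ZMod 29)) <;> simp [fD, h]
  refine ⟨?_, ?_, ?_, ?_, ?_⟩
  · rw [cf_transpose, dA]
  · rw [_root_.gram, _root_.gram, _root_.gram, dA]
    have key := cf4 (conv fA fA) (conv fB (Tn fB)) (conv fB (Tn fB)) (conv fD (Tn fD)) 116 dG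
    rw [← key]
    abel1
  · exact GP_entries fA fB fD pmA pmB pmD
  · exact GP_mul_GPT (cf fA) (cf fB) (cf fB) (cf fD) (blocks_eq fA fB fD 116 dA dG)
  · exact GP_symm fA fB fD dA
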